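/- Fix a nonzero r ∈ F_2^k and a finite multiset G of vectors from F_2^k. Let t(G) denote the maximum number of pairwise disjoint recovery sets for r in G. Then greedily taking all recovery sets of size at most 2 is optimal: t(G) = t≤2(G) + t(G'), where t≤2(G) is the number of disjoint recovery sets of size at most 2 in G (which equals N_G(r) + (1/2)Σ_{e≠0,r} min(N_G(e), N_G(r+e))), and G' is the multiset with N_{G'}(r) = 0 and N_{G'}(e) = N_G(e) − min(N_G(e), N_G(r+e)) for e ≠ 0, r. -/

import Mathlib

namespace GreedyRS

variable {k : ℕ}

abbrev V (k : ℕ) := Fin k → ZMod 2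

def RS (r : V k) (M : Multiset (V k)) : Set ℕ :=
  {t : ℕ | ∃ S : Fin t → Multiset (V k), (∑ i, S i) ≤ M ∧ ∀ i, (S i).sum = r}

noncomputable def tmax (r : V k) (M : Multiset (V k)) : ℕ := sSup (RS r M)

lemma char2 (x : V k) : x + x = 0 := by
  funext i; exact CharTwo.add_self_eq_zero (x i)

lemma mem_RS_iff {r : V k} {M : Multiset (V k)} {t : ℕ} :
    t ∈ RS r M ↔ ∃ C : Multiset (Multiset (V k)),
      Multiset.card C = t ∧ C.sum ≤ M ∧ ∀ A ∈ C, A.sum = r := by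
  constructor
  · rintro ⟨S, hle, hsum⟩
    refine ⟨Finset.univ.val.map S, by simp, ?_, ?_⟩
    · simpa [Finset.sum] using hle
    · intro A hA
      rcases Multiset.mem_map.1 hA with ⟨i, _, rfl⟩
      exact hsum i
  · rintro ⟨C, hcard, hle, hsum⟩
    rcases C with ⟨l⟩
    subst hcard
    refine ⟨fun i => l.get i, ?_, fun i => hsum _ (l.get_mem i)⟩
    calc (∑ i : Fin l.length, l.get i) = l.sum := by
          simpa using Fin.sum_univ_get l
      _ ≤ M := hle

lemma zero_mem_RS (r : V k) (M : Multiset (V k)) : 0 ∈ RS r M :=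
  ⟨fun i => i.elim0, by simp, fun i => i.elim0⟩

lemma card_le_card_sum {C : Multiset (Multiset (V k))} (h1 : ∀ A ∈ C, A ≠ 0) :
    Multiset.card C ≤ Multiset.card C.sum := by
  induction C using Multiset.induction with
  | empty => simp
  | cons A C ih =>
    simp only [Multiset.card_cons, Multiset.sum_cons, Multiset.card_add]
    have hA : 1 ≤ Multiset.card A :=
      Multiset.card_pos.2 (h1 A (Multiset.mem_cons_self _ _))
    have := ih (fun B hB => h1 B (Multiset.mem_cons_of_mem hB))
    omega

lemma le_card_of_mem_RS {r : V k} (hr : r ≠ 0) {M : Multiset (V k)} {t : ℕ}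
    (ht : t ∈ RS r M) : t ≤ Multiset.card M := by
  rcases mem_RS_iff.1 ht with ⟨C, rfl, hle, hsum⟩
  have h1 : ∀ A ∈ C, A ≠ 0 := by
    rintro A hA rfl
    exact hr (by simpa using (hsum 0 hA).symm)
  exact (card_le_card_sum h1).trans (Multiset.card_le_card hle)

lemma bddAbove_RS {r : V k} (hr : r ≠ 0) (M : Multiset (V k)) : BddAbove (RS r M) :=
  ⟨Multiset.card M, fun _ ht => le_card_of_mem_RS hr ht⟩

lemma tmax_mem {r : V k} (hr : r ≠ 0) (M : Multiset (V k)) : tmax r M ∈ RS r M :=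
  Nat.sSup_mem ⟨0, zero_mem_RS r M⟩ (bddAbove_RS hr M)

lemma le_tmax {r : V k} (hr : r ≠ 0) {M : Multiset (V k)} {t : ℕ} (ht : t ∈ RS r M) :
    t ≤ tmax r M := le_csSup (bddAbove_RS hr M) ht

lemma le_erase {N M : Multiset (V k)} {a : V k}
    (ha : N.count a + 1 ≤ M.count a)
    (h : ∀ x, x ≠ a → N.count x ≤ M.count x) :
    N ≤ M.erase a := by
  rw [Multiset.le_iff_count]
  intro x
  by_cases hxa : x = a
  · subst hxa; rw [Multiset.count_erase_self]; omega
  · rw [Multiset.count_erase_of_ne hxa]; exact h x hxa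

lemma le_erase_erase {N M : Multiset (V k)} {a b : V k} (hab : a ≠ b)
    (ha : N.count a + 1 ≤ M.count a) (hb : N.count b + 1 ≤ M.count b)
    (h : ∀ x, x ≠ a → x ≠ b → N.count x ≤ M.count x) :
    N ≤ (M.erase a).erase b := by
  rw [Multiset.le_iff_count]
  intro x
  by_cases hxb : x = b
  · subst hxb
    rw [Multiset.count_erase_self, Multiset.count_erase_of_ne hab.symm]
    omega
  · rw [Multiset.count_erase_of_ne hxb]
    by_cases hxa : x = a
    · subst hxa; rw [Multiset.count_erase_self]; omega
    · rw [Multiset.count_erase_of_ne hxa]; exact h x hxa hxb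

lemma notmem_sum {C : Multiset (Multiset (V k))} {x : V k}
    (h : ∀ A ∈ C, x ∉ A) : x ∉ C.sum := by
  induction C using Multiset.induction with
  | empty => simp
  | cons A C ih =>
    simp only [Multiset.sum_cons, Multiset.mem_add]
    push_neg
    exact ⟨h A (Multiset.mem_cons_self _ _),
      ih fun B hB => h B (Multiset.mem_cons_of_mem hB)⟩


lemma sum_erase' {A : Multiset (V k)} {a : V k} (ha : a ∈ A) :
    (A.erase a).sum = a + A.sum := by
  conv_rhs => rw [← Multiset.cons_erase ha]
  rw [Multiset.sum_cons, ← add_assoc, char2, zero_add]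

lemma tmax_singleton {r : V k} (hr : r ≠ 0) {M : Multiset (V k)} (h : r ∈ M) :
    tmax r M = 1 + tmax r (M.erase r) := by
  have key : ∀ x : V k, Multiset.count x ({r} : Multiset (V k)) ≤ Multiset.count x M → True := fun _ _ => trivial
  apply le_antisymm
  · -- tmax r M ≤ 1 + tmax r (M.erase r)
    rcases mem_RS_iff.1 (tmax_mem hr M) with ⟨C, hcard, hle, hsum⟩
    by_cases hx : ∃ A ∈ C, r ∈ A
    · rcases hx with ⟨A, hA, hrA⟩
      have hC : A ::ₘ C.erase A = C := Multiset.cons_erase hA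
      have hCsum : C.sum = A + (C.erase A).sum := by rw [← Multiset.sum_cons, hC]
      have hmem : Multiset.card (C.erase A) ∈ RS r (M.erase r) := by
        refine mem_RS_iff.2 ⟨C.erase A, rfl, ?_, fun B hB => hsum B (Multiset.mem_of_mem_erase hB)⟩
        apply le_erase
        · have h1 : 1 ≤ Multiset.count r A := Multiset.count_pos.2 hrA
          have h2 : Multiset.count r C.sum ≤ Multiset.count r M := Multiset.count_le_of_le _ hle
          rw [hCsum, Multiset.count_add] at h2
          omega
        · intro x _
          have h2 : Multiset.count x C.sum ≤ Multiset.count x M := Multiset.count_le_of_le _ hle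
          rw [hCsum, Multiset.count_add] at h2
          omega
      have h1 : 1 ≤ Multiset.card C := Multiset.card_pos.2 (fun h0 => by simp [h0] at hA)
      have h2 := le_tmax hr hmem
      rw [Multiset.card_erase_of_mem hA, Nat.pred_eq_sub_one] at h2
      omega
    · push_neg at hx
      have h0 : Multiset.count r C.sum = 0 := Multiset.count_eq_zero.2 (notmem_sum hx)
      have hmem : Multiset.card C ∈ RS r (M.erase r) := by
        refine mem_RS_iff.2 ⟨C, rfl, ?_, hsum⟩
        apply le_erase
        · have := Multiset.count_pos.2 h; omega
        · intro x _; exact Multiset.count_le_of_le _ hle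
      have := le_tmax hr hmem
      omega
  · -- 1 + tmax r (M.erase r) ≤ tmax r M
    rcases mem_RS_iff.1 (tmax_mem hr (M.erase r)) with ⟨C, hcard, hle, hsum⟩
    have hmem : Multiset.card C + 1 ∈ RS r M := by
      refine mem_RS_iff.2 ⟨({r} : Multiset (V k)) ::ₘ C, by simp, ?_, ?_⟩
      · rw [Multiset.sum_cons]
        calc ({r} : Multiset (V k)) + C.sum ≤ {r} + M.erase r :=
              add_le_add le_rfl hle
          _ = M := by rw [Multiset.singleton_add, Multiset.cons_erase h]
      · intro B hB
        rcases Multiset.mem_cons.1 hB with rfl | hB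
        · simp
        · exact hsum B hB
    have := le_tmax hr hmem
    omega

lemma z1 : ∀ a b : ZMod 2, a + (b + a) = b := by decide
lemma z3 : ∀ a b : ZMod 2, (a + b) + ((b + a) + b) = b := by decide

lemma tmax_pair {r e : V k} (hr : r ≠ 0) (hef : e ≠ r + e) {M : Multiset (V k)}
    (heM : e ∈ M) (hfM : r + e ∈ M) :
    tmax r M = 1 + tmax r ((M.erase e).erase (r + e)) := by
  set M₂ := (M.erase e).erase (r + e) with hM₂
  have hfe : r + e ≠ e := Ne.symm hef
  have hpairsum : e + (r + e) = r := funext fun i => z1 (e i) (r i)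
  apply le_antisymm
  · rcases mem_RS_iff.1 (tmax_mem hr M) with ⟨C, hcard, hle, hsum⟩
    have hcount : ∀ x, Multiset.count x C.sum ≤ Multiset.count x M :=
      fun x => Multiset.count_le_of_le x hle
    by_cases hxe : ∃ A ∈ C, e ∈ A
    · rcases hxe with ⟨A, hA, heA⟩
      have hC : A ::ₘ C.erase A = C := Multiset.cons_erase hA
      have hCsum : ∀ x, Multiset.count x C.sum
          = Multiset.count x A + Multiset.count x (C.erase A).sum := by
        intro x
        conv_lhs => rw [← hC]
        rw [Multiset.sum_cons, Multiset.count_add]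
      have hcardD : Multiset.card (C.erase A) = Multiset.card C - 1 := by
        rw [Multiset.card_erase_of_mem hA, Nat.pred_eq_sub_one]
      have hcard1 : 1 ≤ Multiset.card C := Multiset.card_pos.2 (fun h0 => by simp [h0] at hA)
      have heA1 : 1 ≤ Multiset.count e A := Multiset.count_pos.2 heA
      by_cases hfA : r + e ∈ A
      · -- A contains both e and r+e : drop A
        have hfA1 : 1 ≤ Multiset.count (r + e) A := Multiset.count_pos.2 hfA
        have hmem : Multiset.card (C.erase A) ∈ RS r M₂ := by
          refine mem_RS_iff.2 ⟨C.erase A, rfl, ?_,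
            fun B hB => hsum B (Multiset.mem_of_mem_erase hB)⟩
          refine le_erase_erase hef ?_ ?_ ?_
          · have := hcount e; rw [hCsum e] at this; omega
          · have := hcount (r + e); rw [hCsum (r + e)] at this; omega
          · intro x _ _; have := hcount x; rw [hCsum x] at this; omega
        have := le_tmax hr hmem
        omega
      · by_cases hfB : ∃ B ∈ C.erase A, r + e ∈ B
        · -- exchange
          rcases hfB with ⟨B, hB, hfB⟩
          have hBC : B ∈ C := Multiset.mem_of_mem_erase hB
          have hD : B ::ₘ (C.erase A).erase B = C.erase A := Multiset.cons_erase hB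
          have hDsum : ∀ x, Multiset.count x (C.erase A).sum
              = Multiset.count x B + Multiset.count x ((C.erase A).erase B).sum := by
            intro x
            conv_lhs => rw [← hD]
            rw [Multiset.sum_cons, Multiset.count_add]
          have hcardE : Multiset.card ((C.erase A).erase B)
              = Multiset.card (C.erase A) - 1 := by
            rw [Multiset.card_erase_of_mem hB, Nat.pred_eq_sub_one]
          have hcard2 : 1 ≤ Multiset.card (C.erase A) :=
            Multiset.card_pos.2 (fun h0 => by simp [h0] at hB)
          have hfB1 : 1 ≤ Multiset.count (r + e) B := Multiset.count_pos.2 hfB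
          have hA'sum : (A.erase e + B.erase (r + e)).sum = r := by
            rw [Multiset.sum_add, sum_erase' heA, sum_erase' hfB, hsum A hA, hsum B hBC]
            exact funext fun i => z3 (e i) (r i)
          have hmem : Multiset.card ((C.erase A).erase B) + 1 ∈ RS r M₂ := by
            refine mem_RS_iff.2 ⟨(A.erase e + B.erase (r + e)) ::ₘ (C.erase A).erase B,
              by simp, ?_, ?_⟩
            · rw [Multiset.sum_cons]
              have hcnt : ∀ x, Multiset.count x ((A.erase e + B.erase (r + e))
                  + ((C.erase A).erase B).sum)
                  = Multiset.count x (A.erase e) + Multiset.count x (B.erase (r + e))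
                    + Multiset.count x ((C.erase A).erase B).sum := by
                intro x; rw [Multiset.count_add, Multiset.count_add]
              refine le_erase_erase hef ?_ ?_ ?_
              · have h1 := hcount e
                rw [hCsum e, hDsum e] at h1
                rw [hcnt e, Multiset.count_erase_self, Multiset.count_erase_of_ne hef]
                omega
              · have h1 := hcount (r + e)
                rw [hCsum (r + e), hDsum (r + e)] at h1
                rw [hcnt (r + e), Multiset.count_erase_self, Multiset.count_erase_of_ne hfe]
                omega
              · intro x hxe' hxf'
                have h1 := hcount x
                rw [hCsum x, hDsum x] at h1
                rw [hcnt x, Multiset.count_erase_of_ne hxe', Multiset.count_erase_of_ne hxf']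
                omega
            · intro X hX
              rcases Multiset.mem_cons.1 hX with rfl | hX
              · exact hA'sum
              · exact hsum X (Multiset.mem_of_mem_erase (Multiset.mem_of_mem_erase hX))
          have := le_tmax hr hmem
          omega
        · -- e in A, r+e nowhere else: drop A
          push_neg at hfB
          have h0f : Multiset.count (r + e) (C.erase A).sum = 0 :=
            Multiset.count_eq_zero.2 (notmem_sum hfB)
          have hmem : Multiset.card (C.erase A) ∈ RS r M₂ := by
            refine mem_RS_iff.2 ⟨C.erase A, rfl, ?_,
              fun B hB => hsum B (Multiset.mem_of_mem_erase hB)⟩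
            refine le_erase_erase hef ?_ ?_ ?_
            · have := hcount e; rw [hCsum e] at this; omega
            · have := Multiset.count_pos.2 hfM; omega
            · intro x _ _; have := hcount x; rw [hCsum x] at this; omega
          have := le_tmax hr hmem
          omega
    · push_neg at hxe
      have h0e : Multiset.count e C.sum = 0 := Multiset.count_eq_zero.2 (notmem_sum hxe)
      by_cases hxf : ∃ B ∈ C, r + e ∈ B
      · rcases hxf with ⟨B, hB, hfB⟩
        have hC : B ::ₘ C.erase B = C := Multiset.cons_erase hB
        have hCsum : ∀ x, Multiset.count x C.sum
            = Multiset.count x B + Multiset.count x (C.erase B).sum := by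
          intro x
          conv_lhs => rw [← hC]
          rw [Multiset.sum_cons, Multiset.count_add]
        have hcard1 : 1 ≤ Multiset.card C := Multiset.card_pos.2 (fun h0 => by simp [h0] at hB)
        have hfB1 : 1 ≤ Multiset.count (r + e) B := Multiset.count_pos.2 hfB
        have hmem : Multiset.card (C.erase B) ∈ RS r M₂ := by
          refine mem_RS_iff.2 ⟨C.erase B, rfl, ?_,
            fun X hX => hsum X (Multiset.mem_of_mem_erase hX)⟩
          refine le_erase_erase hef ?_ ?_ ?_
          · have h0 := h0e; rw [hCsum e] at h0
            have := Multiset.count_pos.2 heM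
            omega
          · have := hcount (r + e); rw [hCsum (r + e)] at this; omega
          · intro x _ _; have := hcount x; rw [hCsum x] at this; omega
        have h2 := le_tmax hr hmem
        rw [Multiset.card_erase_of_mem hB, Nat.pred_eq_sub_one] at h2
        omega
      · push_neg at hxf
        have h0f : Multiset.count (r + e) C.sum = 0 :=
          Multiset.count_eq_zero.2 (notmem_sum hxf)
        have hmem : Multiset.card C ∈ RS r M₂ := by
          refine mem_RS_iff.2 ⟨C, rfl, ?_, hsum⟩
          refine le_erase_erase hef ?_ ?_ ?_
          · have := Multiset.count_pos.2 heM; omega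
          · have := Multiset.count_pos.2 hfM; omega
          · intro x _ _; exact hcount x
        have := le_tmax hr hmem
        omega
  · rcases mem_RS_iff.1 (tmax_mem hr M₂) with ⟨C, hcard, hle, hsum⟩
    have hmem : Multiset.card C + 1 ∈ RS r M := by
      refine mem_RS_iff.2 ⟨(e ::ₘ {r + e}) ::ₘ C, by simp, ?_, ?_⟩
      · rw [Multiset.sum_cons]
        calc (e ::ₘ {r + e}) + C.sum ≤ (e ::ₘ {r + e}) + M₂ := add_le_add le_rfl hle
          _ = e ::ₘ (r + e) ::ₘ M₂ := by rw [Multiset.cons_add, Multiset.singleton_add]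
          _ = M := by
              rw [hM₂, Multiset.cons_erase ((Multiset.mem_erase_of_ne hfe).2 hfM),
                Multiset.cons_erase heM]
      · intro B hB
        rcases Multiset.mem_cons.1 hB with rfl | hB
        · rw [Multiset.sum_cons, Multiset.sum_singleton]; exact hpairsum
        · exact hsum B hB
    have := le_tmax hr hmem
    omega


lemma z2 : ∀ a b : ZMod 2, a = b + a → b = 0 := by decide
lemma z6 : ∀ a b : ZMod 2, b + (b + a) = a := by decide

lemma add_add_cancel (x y : V k) : x + (x + y) = y := funext fun i => z6 (y i) (x i)

lemma main_induction {r : V k} (hr : r ≠ 0) :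
    ∀ n (M M' : Multiset (V k)), Multiset.card M ≤ n →
      M'.count r = 0 → M'.count 0 = M.count 0 →
      (∀ e : V k, e ≠ 0 → e ≠ r →
        M'.count e = M.count e - min (M.count e) (M.count (r + e))) →
      tmax r M = (M.count r +
          (∑ e ∈ Finset.univ.filter (fun e : V k => e ≠ 0 ∧ e ≠ r),
            min (M.count e) (M.count (r + e))) / 2) + tmax r M' := by
  intro n
  induction n with
  | zero =>
    intro M M' hcard hM'r hM'0 hM'
    have hM0 : M = 0 := Multiset.card_eq_zero.1 (Nat.le_zero.1 hcard)
    subst hM0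
    have hMM' : M' = 0 := by
      ext x
      simp only [Multiset.count_zero]
      by_cases hx0 : x = 0
      · subst hx0; simpa using hM'0
      · by_cases hxr : x = r
        · subst hxr; exact hM'r
        · simpa using hM' x hx0 hxr
    subst hMM'
    simp
  | succ n ih =>
    intro M M' hcard hM'r hM'0 hM'
    by_cases hrM : r ∈ M
    · -- singleton case
      rw [tmax_singleton hr hrM]
      have hcard' : Multiset.card (M.erase r) ≤ n := by
        rw [Multiset.card_erase_of_mem hrM, Nat.pred_eq_sub_one]
        have : 1 ≤ Multiset.card M := Multiset.card_pos.2 (fun h0 => by simp [h0] at hrM)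
        omega
      have hcount : ∀ x : V k, x ≠ r → Multiset.count x (M.erase r) = Multiset.count x M :=
        fun x hx => Multiset.count_erase_of_ne hx M
      have hrer : ∀ e : V k, e ≠ 0 → r + e ≠ r := by
        intro e he0 h
        exact he0 (by rw [← add_add_cancel r e, h, char2])
      have ih' := ih (M.erase r) M' hcard' hM'r
        (by rw [hcount 0 (Ne.symm hr)]; exact hM'0)
        (by
          intro e he0 her
          rw [hcount e her, hcount (r + e) (hrer e he0)]
          exact hM' e he0 her)
      rw [ih']
      have hsum_eq : (∑ e ∈ Finset.univ.filter (fun e : V k => e ≠ 0 ∧ e ≠ r),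
            min (Multiset.count e (M.erase r)) (Multiset.count (r + e) (M.erase r)))
          = ∑ e ∈ Finset.univ.filter (fun e : V k => e ≠ 0 ∧ e ≠ r),
            min (Multiset.count e M) (Multiset.count (r + e) M) := by
        refine Finset.sum_congr rfl fun x hx => ?_
        rcases Finset.mem_filter.1 hx with ⟨-, hx0, hxr⟩
        rw [hcount x hxr, hcount (r + x) (hrer x hx0)]
      rw [hsum_eq, Multiset.count_erase_self]
      have : 1 ≤ Multiset.count r M := Multiset.count_pos.2 hrM
      omega
    · -- count r M = 0
      have hr0 : Multiset.count r M = 0 := Multiset.count_eq_zero.2 hrM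
      by_cases hex : ∃ e₀ : V k, e₀ ≠ 0 ∧ e₀ ≠ r ∧
          0 < min (Multiset.count e₀ M) (Multiset.count (r + e₀) M)
      · rcases hex with ⟨e₀, h0, hrne, hmin⟩
        have he₀M : e₀ ∈ M := Multiset.count_pos.1 (by omega)
        have hfM : r + e₀ ∈ M := Multiset.count_pos.1 (by omega)
        have hef : e₀ ≠ r + e₀ := fun h => hr (funext fun i => z2 (e₀ i) (r i) (congrFun h i))
        have hfe : r + e₀ ≠ e₀ := Ne.symm hef
        have hrr : r + (r + e₀) = e₀ := add_add_cancel r e₀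
        have hf0 : r + e₀ ≠ 0 := fun h => hrne (by rw [← add_add_cancel r e₀, h, add_zero])
        have hfr : r + e₀ ≠ r := fun h => h0 (by rw [← add_add_cancel r e₀, h, char2])
        rw [tmax_pair hr hef he₀M hfM]
        set H := (M.erase e₀).erase (r + e₀) with hH
        have hHe : Multiset.count e₀ H = Multiset.count e₀ M - 1 := by
          rw [hH, Multiset.count_erase_of_ne hef, Multiset.count_erase_self]
        have hHf : Multiset.count (r + e₀) H = Multiset.count (r + e₀) M - 1 := by
          rw [hH, Multiset.count_erase_self, Multiset.count_erase_of_ne hfe]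
        have hHx : ∀ x : V k, x ≠ e₀ → x ≠ r + e₀ → Multiset.count x H = Multiset.count x M := by
          intro x hx1 hx2
          rw [hH, Multiset.count_erase_of_ne hx2, Multiset.count_erase_of_ne hx1]
        have hcardH : Multiset.card H ≤ n := by
          have h1 : 1 ≤ Multiset.card M := Multiset.card_pos.2 (fun h0 => by simp [h0] at he₀M)
          have hfMe : r + e₀ ∈ M.erase e₀ := (Multiset.mem_erase_of_ne hfe).2 hfM
          rw [hH, Multiset.card_erase_of_mem hfMe, Multiset.card_erase_of_mem he₀M,
            Nat.pred_eq_sub_one, Nat.pred_eq_sub_one]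
          omega
        -- r+x vs e₀, r+e₀ facts
        have hrx1 : ∀ x : V k, x ≠ r + e₀ → r + x ≠ e₀ := by
          intro x hx h
          exact hx (by rw [← add_add_cancel r x, h])
        have hrx2 : ∀ x : V k, x ≠ e₀ → r + x ≠ r + e₀ := by
          intro x hx h
          exact hx (by rw [← add_add_cancel r x, h, hrr])
        have hrer : ∀ e : V k, e ≠ 0 → r + e ≠ r := by
          intro e he0 h
          exact he0 (by rw [← add_add_cancel r e, h, char2])
        have ih' := ih H M' hcardH hM'r
          (by rw [hHx 0 (Ne.symm h0) (Ne.symm hf0)]; exact hM'0)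
          (by
            intro x hx0 hxr
            by_cases hx1 : x = e₀
            · subst hx1
              have := hM' x hx0 hxr
              rw [hHe, hHf]
              omega
            · by_cases hx2 : x = r + e₀
              · subst hx2
                have := hM' (r + e₀) hf0 hfr
                rw [hrr] at this ⊢
                rw [hHf, hHe]
                omega
              · rw [hHx x hx1 hx2, hHx (r + x) (hrx1 x hx2) (hrx2 x hx1)]
                exact hM' x hx0 hxr)
        rw [ih']
        have hrH : Multiset.count r H = Multiset.count r M :=
          hHx r (Ne.symm hrne) (Ne.symm hfr)
        -- sum decomposition
        set F := Finset.univ.filter (fun e : V k => e ≠ 0 ∧ e ≠ r) with hF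
        have he₀F : e₀ ∈ F := Finset.mem_filter.2 ⟨Finset.mem_univ _, h0, hrne⟩
        have hfF : r + e₀ ∈ F.erase e₀ :=
          Finset.mem_erase.2 ⟨hfe, Finset.mem_filter.2 ⟨Finset.mem_univ _, hf0, hfr⟩⟩
        have hsplit : ∀ N : Multiset (V k),
            (∑ e ∈ F, min (Multiset.count e N) (Multiset.count (r + e) N))
            = min (Multiset.count e₀ N) (Multiset.count (r + e₀) N)
              + (min (Multiset.count (r + e₀) N) (Multiset.count e₀ N)
                + ∑ e ∈ (F.erase e₀).erase (r + e₀),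
                    min (Multiset.count e N) (Multiset.count (r + e) N)) := by
          intro N
          calc (∑ e ∈ F, min (Multiset.count e N) (Multiset.count (r + e) N))
              = min (Multiset.count e₀ N) (Multiset.count (r + e₀) N)
                + ∑ e ∈ F.erase e₀, min (Multiset.count e N) (Multiset.count (r + e) N) :=
                (Finset.add_sum_erase _ _ he₀F).symm
            _ = _ := by
                rw [← Finset.add_sum_erase _
                  (fun e => min (Multiset.count e N) (Multiset.count (r + e) N)) hfF, hrr]
        have hrest : (∑ e ∈ (F.erase e₀).erase (r + e₀),
              min (Multiset.count e H) (Multiset.count (r + e) H))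
            = ∑ e ∈ (F.erase e₀).erase (r + e₀),
              min (Multiset.count e M) (Multiset.count (r + e) M) := by
          refine Finset.sum_congr rfl fun x hx => ?_
          rcases Finset.mem_erase.1 hx with ⟨hx2, hx3⟩
          rcases Finset.mem_erase.1 hx3 with ⟨hx1, -⟩
          rw [hHx x hx1 hx2, hHx (r + x) (hrx1 x hx2) (hrx2 x hx1)]
        rw [hsplit M, hsplit H, hrest, hrH, hHe, hHf]
        omega
      · push_neg at hex
        have hMM' : M' = M := by
          ext x
          by_cases hx0 : x = 0
          · subst hx0; exact hM'0
          · by_cases hxr : x = r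
            · subst hxr; rw [hM'r, hr0]
            · have h1 := hM' x hx0 hxr
              have h2 := hex x hx0 hxr
              omega
        have hsum0 : (∑ e ∈ Finset.univ.filter (fun e : V k => e ≠ 0 ∧ e ≠ r),
              min (Multiset.count e M) (Multiset.count (r + e) M)) = 0 := by
          refine Finset.sum_eq_zero fun x hx => ?_
          rcases Finset.mem_filter.1 hx with ⟨-, hx0, hxr⟩
          have := hex x hx0 hxr
          omega
        rw [hMM', hr0, hsum0]
        simp

end GreedyRS

/-- greedy lemma: for nonzero `r`, the maximum number `t(G)` of
pairwise disjoint recovery sets for `r` in `G` satisfies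
`t(G) = t≤2(G) + t(G')`, where `t≤2(G) = N_G(r) + (1/2)∑_{e≠0,r} min(N_G(e), N_G(r+e))`
and `G'` is the multiset with `N_{G'}(r) = 0`, `N_{G'}(0) = N_G(0)` and
`N_{G'}(e) = N_G(e) − min(N_G(e), N_G(r+e))` for `e ≠ 0, r`. -/
theorem greedy_small_recovery_sets_optimal (k : ℕ) (r : Fin k → ZMod 2) (hr : r ≠ 0)
    (G G' : Multiset (Fin k → ZMod 2))
    (hG'r : G'.count r = 0) (hG'0 : G'.count 0 = G.count 0)
    (hG' : ∀ e : Fin k → ZMod 2, e ≠ 0 → e ≠ r →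
      G'.count e = G.count e - min (G.count e) (G.count (r + e))) :
    sSup {t : ℕ | ∃ S : Fin t → Multiset (Fin k → ZMod 2),
        (∑ i, S i) ≤ G ∧ ∀ i, (S i).sum = r}
      = (G.count r +
          (∑ e ∈ Finset.univ.filter (fun e : Fin k → ZMod 2 => e ≠ 0 ∧ e ≠ r),
            min (G.count e) (G.count (r + e))) / 2)
        + sSup {t : ℕ | ∃ S : Fin t → Multiset (Fin k → ZMod 2),
            (∑ i, S i) ≤ G' ∧ ∀ i, (S i).sum = r} :=
  GreedyRS.main_induction hr (Multiset.card G) G G' le_rfl hG'r hG'0 hG'
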